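/- Let g = m ⊕ h be a finite-dimensional real Hermitian symmetric Lie algebra with distinguished element A ∈ h. Then for every q ∈ m: (i) [A,[q,[q,[A,q]]]] = −[[A,q],[[A,q],q]], and (ii) [q,[A,[q,[q,[A,q]]]]] = 0. -/
import Mathlib


/-- In a finite-dimensional real Hermitian symmetric Lie algebra
`g = m ⊕ h` with distinguished element `A ∈ h`, for every `q ∈ m`:
(i) `[A,[q,[q,[A,q]]]] = -[[A,q],[[A,q],q]]`, and
(ii) `[q,[A,[q,[q,[A,q]]]]] = 0`. -/
theorem hermitian_bracket_identities
    {L : Type*} [LieRing L] [LieAlgebra ℝ L] [Module.Finite ℝ L]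
    (m h : Submodule ℝ L) (hcompl : IsCompl m h)
    (hhh : ∀ X ∈ h, ∀ Y ∈ h, ⁅X, Y⁆ ∈ h)
    (hhm : ∀ X ∈ h, ∀ Y ∈ m, ⁅X, Y⁆ ∈ m)
    (hmm : ∀ X ∈ m, ∀ Y ∈ m, ⁅X, Y⁆ ∈ h)
    (A : L) (hA : A ∈ h)
    (hcent : ∀ Y ∈ h, ⁅A, Y⁆ = 0)
    (hJ : ∀ X ∈ m, ⁅A, ⁅A, X⁆⁆ = -X) :
    ∀ q ∈ m,
      (⁅A, ⁅q, ⁅q, ⁅A, q⁆⁆⁆⁆ = -⁅⁅A, q⁆, ⁅⁅A, q⁆, q⁆⁆) ∧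
      (⁅q, ⁅A, ⁅q, ⁅q, ⁅A, q⁆⁆⁆⁆⁆ = 0) := by
  intro q hq
  set p := ⁅A, q⁆ with hpdef
  have hp : p ∈ m := hhm A hA q hq
  have hs : ⁅q, p⁆ ∈ h := hmm q hq p hp
  have hAs : ⁅A, ⁅q, p⁆⁆ = 0 := hcent _ hs
  -- part (i) computation
  have hAqs : ⁅A, ⁅q, ⁅q, p⁆⁆⁆ = ⁅p, ⁅q, p⁆⁆ := by
    rw [leibniz_lie, hAs, lie_zero, add_zero]
  have hi : ⁅A, ⁅q, ⁅q, p⁆⁆⁆ = -⁅p, ⁅p, q⁆⁆ := by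
    rw [hAqs, ← lie_skew q p, lie_neg]
  refine ⟨hi, ?_⟩
  -- part (ii)
  -- membership facts
  have hqs_m : ⁅q, ⁅q, p⁆⁆ ∈ m := by
    have h1 : ⁅⁅q, p⁆, q⁆ ∈ m := hhm _ hs q hq
    have h2 := m.neg_mem h1
    rwa [lie_skew] at h2
  have hT : ⁅q, ⁅q, ⁅q, p⁆⁆⁆ ∈ h := hmm q hq _ hqs_m
  have hA0 : ⁅A, ⁅q, ⁅q, ⁅q, p⁆⁆⁆⁆ = 0 := hcent _ hT
  -- expand hA0 via Leibniz
  have key : ⁅p, ⁅q, ⁅q, p⁆⁆⁆ + ⁅q, ⁅p, ⁅q, p⁆⁆⁆ = 0 := by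
    have := hA0
    rw [leibniz_lie, hAqs] at this
    exact this
  have eq1 : ⁅q, ⁅p, ⁅q, p⁆⁆⁆ = ⁅p, ⁅q, ⁅q, p⁆⁆⁆ := by
    rw [leibniz_lie, lie_self, zero_add]
  have h2X : ⁅q, ⁅p, ⁅q, p⁆⁆⁆ + ⁅q, ⁅p, ⁅q, p⁆⁆⁆ = 0 := by
    nth_rewrite 1 [eq1]; exact key
  have hX0 : ⁅q, ⁅p, ⁅q, p⁆⁆⁆ = 0 := by
    have h2 : (2 : ℝ) • ⁅q, ⁅p, ⁅q, p⁆⁆⁆ = 0 := by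
      rw [two_smul]; exact h2X
    have := smul_eq_zero.mp h2
    rcases this with h' | h'
    · norm_num at h'
    · exact h'
  rw [hAqs, hX0]
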